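/- Let B, Q be real n×n matrices with Q symmetric positive semidefinite, with B nilpotent, satisfying the Kalman rank condition. Then for every s > 0 there exists a constant c > 0 such that for all t > 0, M_t^s ≤ c·t^{1/2 - 1/(2s)}, where M_t^s = sup_{ξ ∈ S^{n-1}} [∫₀ᵗ |Q^{1/2} e^{τBᵀ} ξ|² dτ]^{1/2} · [∫₀ᵗ |Q^{1/2} e^{τBᵀ} ξ|^{2s} dτ]^{-1/(2s)}. -/

import Mathlib

open Matrix

/-- The square root of a positive semidefinite matrix, as `Matrix.PosSemidef.sqrt` was defined
in older Mathlib (removed since). -/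
noncomputable def Matrix.PosSemidef.sqrt {n : Type*} [Fintype n] [DecidableEq n]
    {A : Matrix n n ℝ} (hA : A.PosSemidef) : Matrix n n ℝ :=
  hA.1.eigenvectorUnitary.1 * diagonal ((↑) ∘ Real.sqrt ∘ hA.1.eigenvalues) *
    (star hA.1.eigenvectorUnitary : Matrix n n ℝ)

/-- The Euclidean norm of a vector of `ℝⁿ`. -/
noncomputable def euclNorm {n : ℕ} (v : Fin n → ℝ) : ℝ := Real.sqrt (∑ i, v i ^ 2)

/-- The quantity
`M_t^s = sup_{ξ ∈ S^{n-1}} (∫₀ᵗ |Q^{1/2}e^{τBᵀ}ξ|² dτ)^{1/2} (∫₀ᵗ |Q^{1/2}e^{τBᵀ}ξ|^{2s} dτ)^{-1/(2s)}`. -/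
noncomputable def Mts {n : ℕ} (B Q : Matrix (Fin n) (Fin n) ℝ) (hQ : Q.PosSemidef)
    (s t : ℝ) : ℝ :=
  ⨆ ξ : {v : Fin n → ℝ // euclNorm v = 1},
    (∫ τ in (0:ℝ)..t,
        euclNorm (hQ.sqrt *ᵥ (NormedSpace.exp (τ • Bᵀ) *ᵥ (ξ : Fin n → ℝ))) ^ (2:ℝ)) ^ ((1:ℝ)/2) *
    (∫ τ in (0:ℝ)..t,
        euclNorm (hQ.sqrt *ᵥ (NormedSpace.exp (τ • Bᵀ) *ᵥ (ξ : Fin n → ℝ))) ^ (2*s)) ^ (-(1/(2*s)))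

/-- The Kalman rank condition (kernel form). -/
def KalmanKer {n : ℕ} (B Q : Matrix (Fin n) (Fin n) ℝ) (hQ : Q.PosSemidef) : Prop :=
  ∃ r : ℕ, r ≤ n - 1 ∧
    (⨅ k ∈ Finset.range (r + 1),
      LinearMap.ker (Matrix.mulVecLin (hQ.sqrt * Bᵀ ^ k))) = ⊥

namespace Aux

lemma euclNorm_nonneg {n : ℕ} (v : Fin n → ℝ) : 0 ≤ euclNorm v := Real.sqrt_nonneg _

lemma euclNorm_eq_zero {n : ℕ} {v : Fin n → ℝ} (h : euclNorm v = 0) : v = 0 := by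
  have h2 : ∑ i, v i ^ 2 = 0 := by
    have h1 := Real.sqrt_eq_zero'.mp h
    have h3 : 0 ≤ ∑ i, v i ^ 2 := Finset.sum_nonneg fun i _ => sq_nonneg _
    linarith
  funext i
  have := (Finset.sum_eq_zero_iff_of_nonneg (fun i _ => sq_nonneg (v i))).mp h2 i (Finset.mem_univ i)
  simpa using pow_eq_zero_iff (n := 2) (by norm_num) |>.mp this

lemma euclNorm_smul {n : ℕ} (r : ℝ) (v : Fin n → ℝ) :
    euclNorm (r • v) = |r| * euclNorm v := by
  unfold euclNorm
  rw [← Real.sqrt_sq_eq_abs, ← Real.sqrt_mul (sq_nonneg r), Finset.mul_sum]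
  congr 1
  refine Finset.sum_congr rfl fun i _ => ?_
  simp [mul_pow]

lemma euclNorm_continuous {n : ℕ} : Continuous fun v : Fin n → ℝ => euclNorm v := by
  unfold euclNorm
  exact Real.continuous_sqrt.comp (continuous_finset_sum _ fun i _ =>
    ((continuous_apply i).pow 2))

/-- The vector polynomial with coefficients `c`. -/
noncomputable def pc {n k : ℕ} (c : Fin k → Fin n → ℝ) (α : ℝ) : Fin n → ℝ :=
  ∑ j : Fin k, α ^ (j : ℕ) • c j

lemma pc_continuous {n k : ℕ} :
    Continuous fun p : (Fin k → Fin n → ℝ) × ℝ => pc p.1 p.2 := by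
  unfold pc
  refine continuous_finset_sum _ fun j _ => ?_
  exact (continuous_snd.pow _).smul ((continuous_apply j).comp continuous_fst)

lemma pc_smul {n k : ℕ} (r : ℝ) (c : Fin k → Fin n → ℝ) (α : ℝ) :
    pc (r • c) α = r • pc c α := by
  unfold pc
  rw [Finset.smul_sum]
  refine Finset.sum_congr rfl fun j _ => ?_
  rw [Pi.smul_apply]
  exact smul_comm _ _ _

lemma poly_coords {n k : ℕ} (c : Fin k → Fin n → ℝ)
    (h : ∀ α ∈ Set.Icc (0:ℝ) 1, (∑ j : Fin k, α ^ (j:ℕ) • c j) = 0) : c = 0 := by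
  funext j₀ i
  set q : Polynomial ℝ := ∑ j : Fin k, Polynomial.C (c j i) * Polynomial.X ^ (j:ℕ) with hq
  have heval : ∀ α : ℝ, q.eval α = (∑ j : Fin k, α ^ (j:ℕ) • c j) i := by
    intro α
    rw [hq, Polynomial.eval_finset_sum, Finset.sum_apply]
    refine Finset.sum_congr rfl fun j _ => ?_
    rw [Polynomial.eval_mul, Polynomial.eval_C, Polynomial.eval_pow, Polynomial.eval_X,
      Pi.smul_apply, smul_eq_mul, mul_comm]
  have hq0 : q = 0 := by
    refine Polynomial.eq_zero_of_infinite_isRoot q ?_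
    refine Set.Infinite.mono ?_ (Set.infinite_coe_iff.mp (Set.Icc.infinite (zero_lt_one (α := ℝ))))
    intro α hα
    simp only [Set.mem_setOf_eq, Polynomial.IsRoot.def, heval, h α hα]
    rfl
  have := congrArg (fun p => Polynomial.coeff p (j₀ : ℕ)) hq0
  simp only [hq, Polynomial.finset_sum_coeff, Polynomial.coeff_C_mul,
    Polynomial.coeff_X_pow, Polynomial.coeff_zero] at this
  rw [Finset.sum_eq_single j₀] at this
  · simpa using this
  · intro b _ hb
    rw [if_neg (by simpa [Fin.val_eq_val, eq_comm] using hb), mul_zero]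
  · simp

/-- The integral functional with real exponent `r`. -/
noncomputable def Np {n k : ℕ} (r : ℝ) (c : Fin k → Fin n → ℝ) : ℝ :=
  ∫ α in (0:ℝ)..1, euclNorm (pc c α) ^ r

lemma Np_nonneg {n k : ℕ} (r : ℝ) (c : Fin k → Fin n → ℝ) : 0 ≤ Np r c :=
  intervalIntegral.integral_nonneg zero_le_one fun α _ =>
    Real.rpow_nonneg (euclNorm_nonneg _) _

lemma Np_continuous {n k : ℕ} {r : ℝ} (hr : 0 < r) :
    Continuous fun c : Fin k → Fin n → ℝ => Np r c := by
  unfold Np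
  apply intervalIntegral.continuous_parametric_intervalIntegral_of_continuous'
  have h1 : Continuous fun p : (Fin k → Fin n → ℝ) × ℝ => euclNorm (pc p.1 p.2) :=
    euclNorm_continuous.comp pc_continuous
  refine continuous_iff_continuousAt.mpr fun p => ?_
  exact (Real.continuousAt_rpow_const _ _ (Or.inr hr.le)).comp h1.continuousAt

lemma Np_smul {n k : ℕ} {r : ℝ} (hr : 0 < r) {t : ℝ} (ht : 0 ≤ t)
    (c : Fin k → Fin n → ℝ) : Np r (t • c) = t ^ r * Np r c := by
  unfold Np
  rw [← intervalIntegral.integral_const_mul]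
  refine intervalIntegral.integral_congr fun α _ => ?_
  rw [pc_smul, euclNorm_smul, abs_of_nonneg ht,
    Real.mul_rpow ht (euclNorm_nonneg _)]

lemma Np_pos {n k : ℕ} {r : ℝ} (hr : 0 < r) {c : Fin k → Fin n → ℝ} (hc : c ≠ 0) :
    0 < Np r c := by
  have hex : ∃ α ∈ Set.Icc (0:ℝ) 1, pc c α ≠ 0 := by
    by_contra hcon
    push_neg at hcon
    exact hc (poly_coords c hcon)
  obtain ⟨α₀, hα₀, hne⟩ := hex
  have hpos : 0 < euclNorm (pc c α₀) :=
    lt_of_le_of_ne (euclNorm_nonneg _) fun h => hne (euclNorm_eq_zero h.symm)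
  refine intervalIntegral.integral_pos zero_lt_one ?_
    (fun x _ => Real.rpow_nonneg (euclNorm_nonneg _) _)
    ⟨α₀, hα₀, Real.rpow_pos_of_pos hpos _⟩
  refine Continuous.continuousOn ?_
  have h1 : Continuous fun α : ℝ => euclNorm (pc c α) :=
    euclNorm_continuous.comp (pc_continuous.comp (Continuous.prodMk_right c))
  exact continuous_iff_continuousAt.mpr fun α =>
    (Real.continuousAt_rpow_const _ _ (Or.inr hr.le)).comp h1.continuousAt

/-- Key norm-equivalence bound, uniform over all coefficient vectors. -/
lemma key {n k : ℕ} (hn : 0 < n) (hk : 0 < k) {s : ℝ} (hs : 0 < s) :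
    ∃ C > 0, ∀ c : Fin k → Fin n → ℝ,
      Np (n := n) (k := k) 2 c ^ ((1:ℝ)/2) ≤ C * Np (2*s) c ^ (1/(2*s)) := by
  have h2s : (0:ℝ) < 2 * s := by linarith
  haveI : Nonempty (Fin n) := ⟨⟨0, hn⟩⟩
  haveI : Nonempty (Fin k) := ⟨⟨0, hk⟩⟩
  haveI : Nontrivial (Fin k → Fin n → ℝ) := inferInstance
  set S := Metric.sphere (0 : Fin k → Fin n → ℝ) 1 with hS
  have hcomp : IsCompact S := isCompact_sphere _ _
  have hne : S.Nonempty := NormedSpace.sphere_nonempty.mpr zero_le_one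
  obtain ⟨c₁, hc₁S, hc₁⟩ := hcomp.exists_isMinOn hne (Np_continuous (r := 2*s) h2s).continuousOn
  obtain ⟨c₂, hc₂S, hc₂⟩ := hcomp.exists_isMaxOn hne (Np_continuous (r := 2) two_pos).continuousOn
  have hm : 0 < Np (2*s) c₁ := by
    refine Np_pos h2s fun h => ?_
    rw [h] at hc₁S
    simp [hS] at hc₁S
  set m := Np (2*s) c₁ ^ ((1:ℝ)/(2*s)) with hmdef
  set M := Np (n := n) (k := k) 2 c₂ ^ ((1:ℝ)/2) with hMdef
  have hmpos : 0 < m := Real.rpow_pos_of_pos hm _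
  have hMnn : 0 ≤ M := Real.rpow_nonneg (Np_nonneg _ _) _
  refine ⟨(M + 1) / m, by positivity, fun c => ?_⟩
  by_cases hc : c = 0
  · subst hc
    have h0 : pc (0 : Fin k → Fin n → ℝ) = fun _ => (0 : Fin n → ℝ) := by
      funext α; simp [pc]
    have hz : ∀ r : ℝ, r ≠ 0 → Np (n := n) (k := k) r 0 = 0 := by
      intro r hr
      unfold Np
      rw [h0]
      simp [euclNorm, Real.zero_rpow hr]
    rw [hz 2 two_ne_zero, hz (2*s) (ne_of_gt h2s), Real.zero_rpow (by norm_num),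
      Real.zero_rpow (by positivity)]
    positivity
  · set t := ‖c‖ with ht
    have htpos : 0 < t := norm_pos_iff.mpr hc
    set c' := t⁻¹ • c with hc'
    have hc'S : c' ∈ S := by
      rw [hS, Metric.mem_sphere, dist_zero_right, hc', norm_smul, norm_inv,
        Real.norm_eq_abs, abs_of_pos htpos]
      exact inv_mul_cancel₀ (ne_of_gt htpos)
    have hrec : c = t • c' := by
      rw [hc', smul_smul, mul_inv_cancel₀ (ne_of_gt htpos), one_smul]
    have e2 : Np (n := n) (k := k) 2 c ^ ((1:ℝ)/2)
        = t * Np (n := n) (k := k) 2 c' ^ ((1:ℝ)/2) := by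
      rw [hrec, Np_smul two_pos htpos.le, Real.mul_rpow (by positivity) (Np_nonneg _ _),
        ← Real.rpow_mul htpos.le]
      norm_num
    have e2s : Np (2*s) c ^ ((1:ℝ)/(2*s)) = t * Np (2*s) c' ^ ((1:ℝ)/(2*s)) := by
      rw [hrec, Np_smul h2s htpos.le, Real.mul_rpow (by positivity) (Np_nonneg _ _),
        ← Real.rpow_mul htpos.le, mul_one_div, div_self (ne_of_gt h2s), Real.rpow_one]
    have hlow : m ≤ Np (2*s) c' ^ ((1:ℝ)/(2*s)) :=
      Real.rpow_le_rpow hm.le (hc₁ hc'S) (by positivity)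
    have hup : Np (n := n) (k := k) 2 c' ^ ((1:ℝ)/2) ≤ M :=
      Real.rpow_le_rpow (Np_nonneg _ _) (hc₂ hc'S) (by positivity)
    rw [one_div, one_div] at *
    calc Np (n := n) (k := k) 2 c ^ ((2:ℝ))⁻¹ = t * Np (n := n) (k := k) 2 c' ^ ((2:ℝ))⁻¹ := by
          rw [e2]
      _ ≤ t * M := by
          exact mul_le_mul_of_nonneg_left hup htpos.le
      _ ≤ (M + 1) / m * (t * Np (2*s) c' ^ ((2*s))⁻¹) := by
          rw [div_mul_eq_mul_div, le_div_iff₀ hmpos]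
          calc t * M * m ≤ t * ((M+1) * Np (2*s) c' ^ (2*s)⁻¹) := by
                rw [mul_assoc]
                refine mul_le_mul_of_nonneg_left ?_ htpos.le
                exact mul_le_mul (by linarith) hlow hmpos.le (by linarith)
            _ = (M + 1) * (t * Np (2*s) c' ^ (2*s)⁻¹) := by ring
      _ = (M + 1) / m * Np (2*s) c ^ ((2*s))⁻¹ := by rw [e2s]

lemma exp_nilp {m : ℕ} {x : Matrix (Fin m) (Fin m) ℝ} {k : ℕ} (h : x ^ k = 0) :
    NormedSpace.exp x = ∑ j ∈ Finset.range k, ((Nat.factorial j : ℝ))⁻¹ • x ^ j := by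
  rw [NormedSpace.exp_eq_tsum (𝕂 := ℝ)]
  refine tsum_eq_sum fun j hj => ?_
  have hkj : k ≤ j := Nat.le_of_not_lt fun hlt => hj (Finset.mem_range.mpr hlt)
  rw [pow_eq_zero_of_le hkj h, smul_zero]

lemma sum_mulVec {m : ℕ} {ι : Type*} (s : Finset ι) (A : ι → Matrix (Fin m) (Fin m) ℝ)
    (x : Fin m → ℝ) : (∑ j ∈ s, A j) *ᵥ x = ∑ j ∈ s, A j *ᵥ x :=
  map_sum (Matrix.mulVec.addMonoidHomLeft x) A s

end Aux

/-- If `B` is nilpotent, then for every `s > 0` there is `c > 0` with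
`M_t^s ≤ c t^{1/2 - 1/(2s)}` for all `t > 0`. -/
theorem stmt_10 {n : ℕ} (hn : 0 < n) (B Q : Matrix (Fin n) (Fin n) ℝ)
    (hQ : Q.PosSemidef) (hB : IsNilpotent B) (hK : KalmanKer B Q hQ)
    (s : ℝ) (hs : 0 < s) :
    ∃ c > 0, ∀ t : ℝ, 0 < t → Mts B Q hQ s t ≤ c * t ^ ((1:ℝ)/2 - 1/(2*s)) := by
  classical
  obtain ⟨k₀, hk₀⟩ := hB
  set k := k₀ + 1 with hk
  have hk0 : 0 < k := Nat.succ_pos _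
  have hBk : Bᵀ ^ k = 0 := by
    have hB' : B ^ k = 0 := by rw [hk, pow_succ, hk₀, zero_mul]
    rw [← Matrix.transpose_pow, hB', Matrix.transpose_zero]
  have h2s : (0:ℝ) < 2 * s := by linarith
  obtain ⟨C, hC, hCle⟩ := Aux.key (n := n) (k := k) hn hk0 hs
  refine ⟨C, hC, fun t ht => ?_⟩
  haveI : Nonempty {v : Fin n → ℝ // euclNorm v = 1} := by
    refine ⟨⟨Pi.single ⟨0, hn⟩ 1, ?_⟩⟩
    unfold euclNorm
    rw [Finset.sum_eq_single (⟨0, hn⟩ : Fin n)]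
    · simp
    · intro b _ hb; simp [Pi.single_apply, hb]
    · simp
  unfold Mts
  refine ciSup_le fun ξ => ?_
  set c : Fin k → Fin n → ℝ :=
    fun j => (t ^ (j:ℕ) * ((Nat.factorial (j:ℕ) : ℝ))⁻¹) •
      (hQ.sqrt *ᵥ ((Bᵀ) ^ (j:ℕ) *ᵥ (ξ : Fin n → ℝ))) with hc
  have hpc : ∀ α : ℝ, hQ.sqrt *ᵥ (NormedSpace.exp ((α * t) • Bᵀ) *ᵥ (ξ : Fin n → ℝ))
      = Aux.pc c α := by
    intro α
    have hx : ((α * t) • Bᵀ) ^ k = 0 := by rw [smul_pow, hBk, smul_zero]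
    calc hQ.sqrt *ᵥ (NormedSpace.exp ((α * t) • Bᵀ) *ᵥ (ξ : Fin n → ℝ))
        = hQ.sqrt *ᵥ ((∑ j ∈ Finset.range k,
            ((Nat.factorial j : ℝ))⁻¹ • ((α*t) • Bᵀ) ^ j) *ᵥ (ξ : Fin n → ℝ)) := by
          rw [Aux.exp_nilp hx]
      _ = ∑ j ∈ Finset.range k, (((Nat.factorial j : ℝ))⁻¹ * (α*t)^j) •
            (hQ.sqrt *ᵥ ((Bᵀ)^j *ᵥ (ξ : Fin n → ℝ))) := by
          rw [Aux.sum_mulVec, ← Matrix.mulVecLin_apply, map_sum]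
          refine Finset.sum_congr rfl fun j _ => ?_
          rw [smul_pow, Matrix.smul_mulVec, Matrix.smul_mulVec, smul_smul,
            Matrix.mulVecLin_apply, Matrix.mulVec_smul]
      _ = Aux.pc c α := by
          unfold Aux.pc
          rw [← Fin.sum_univ_eq_sum_range (fun j => (((Nat.factorial j : ℝ))⁻¹ * (α*t)^j) •
            (hQ.sqrt *ᵥ ((Bᵀ)^j *ᵥ (ξ : Fin n → ℝ)))) k]
          refine Finset.sum_congr rfl fun j _ => ?_
          simp only [hc]
          rw [smul_smul, mul_pow]
          congr 1
          ring
  have hsub : ∀ r : ℝ,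
      (∫ τ in (0:ℝ)..t, euclNorm
        (hQ.sqrt *ᵥ (NormedSpace.exp (τ • Bᵀ) *ᵥ (ξ : Fin n → ℝ))) ^ r)
      = t * Aux.Np r c := by
    intro r
    have h := intervalIntegral.integral_comp_mul_right
      (a := 0) (b := 1) (fun τ => euclNorm
        (hQ.sqrt *ᵥ (NormedSpace.exp (τ • Bᵀ) *ᵥ (ξ : Fin n → ℝ))) ^ r) (ne_of_gt ht)
    simp only [zero_mul, one_mul, smul_eq_mul] at h
    have h2 : (∫ α in (0:ℝ)..1, euclNorm
        (hQ.sqrt *ᵥ (NormedSpace.exp ((α * t) • Bᵀ) *ᵥ (ξ : Fin n → ℝ))) ^ r)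
        = Aux.Np r c := by
      unfold Aux.Np
      refine intervalIntegral.integral_congr fun α _ => ?_
      rw [hpc α]
    rw [h2] at h
    rw [h, ← mul_assoc, mul_inv_cancel₀ (ne_of_gt ht), one_mul]
  rw [hsub 2, hsub (2*s)]
  have hNp2 := Aux.Np_nonneg (n := n) (k := k) 2 c
  have hNps := Aux.Np_nonneg (n := n) (k := k) (2*s) c
  rw [Real.mul_rpow ht.le hNp2, Real.mul_rpow ht.le hNps]
  have hre : t ^ ((1:ℝ)/2) * Aux.Np 2 c ^ ((1:ℝ)/2) *
      (t ^ (-(1/(2*s))) * Aux.Np (2*s) c ^ (-(1/(2*s))))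
      = t ^ ((1:ℝ)/2 - 1/(2*s)) * (Aux.Np 2 c ^ ((1:ℝ)/2) * Aux.Np (2*s) c ^ (-(1/(2*s)))) := by
    rw [sub_eq_add_neg, Real.rpow_add ht]
    ring
  rw [hre, mul_comm C _]
  refine mul_le_mul_of_nonneg_left ?_ (Real.rpow_nonneg ht.le _)
  by_cases h0 : Aux.Np (2*s) c = 0
  · rw [h0, Real.zero_rpow (neg_ne_zero.mpr (by positivity)), mul_zero]
    exact hC.le
  · have hpos : 0 < Aux.Np (2*s) c := lt_of_le_of_ne hNps (Ne.symm h0)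
    rw [Real.rpow_neg hNps, ← div_eq_mul_inv,
      div_le_iff₀ (Real.rpow_pos_of_pos hpos _)]
    exact hCle c
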